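/- arXiv:1808.03052 — 5 statements merged into one kernel-verified Lean document; each statement's English description precedes it below -/
import Mathlib

section
/- For elements a, b in a unital complex Banach algebra A and every λ ∈ ℂ, e^{λa} e^{-λb} = ∑_{j=0}^∞ λ^j (C_{a,b}^j 1)/j!, the series converging absolutely in A. -/
open Filter Metric

variable {A : Type*}

/-- The operator `C_{a,b} = L_a - R_b`. -/
noncomputable def Cop [NormedRing A] [NormedAlgebra ℂ A] (a b : A) : Module.End ℂ A :=
  LinearMap.mulLeft ℂ a - LinearMap.mulRight ℂ b

/-- `ρ(a,b) = limsup_n ‖C_{a,b}^n 1‖^{1/n}`. -/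
noncomputable def rho [NormedRing A] [NormedAlgebra ℂ A] (a b : A) : ℝ :=
  Filter.limsup (fun n : ℕ => ‖(Cop a b ^ n) 1‖ ^ (1 / (n : ℝ))) Filter.atTop

/-- The spectral semidistance `d(a,b) = max{ρ(a,b), ρ(b,a)}`. -/
noncomputable def qd [NormedRing A] [NormedAlgebra ℂ A] (a b : A) : ℝ :=
  max (rho a b) (rho b a)

/-- The Riesz projection of `a` at `lam`, computed over a circle of radius `r`. -/
noncomputable def rieszP [NormedRing A] [NormedAlgebra ℂ A] (a : A) (lam : ℂ) (r : ℝ) : A :=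
  ((2 * Real.pi * Complex.I : ℂ))⁻¹ •
    circleIntegral (fun z => Ring.inverse (algebraMap ℂ A z - a)) lam r

open scoped Classical in
/-- The Riesz projection at an isolated spectral point (radius chosen by choice). -/
noncomputable def rieszIdem [NormedRing A] [NormedAlgebra ℂ A] (a : A) (lam : ℂ) : A :=
  if h : ∃ r : ℝ, 0 < r ∧ spectrum ℂ a ∩ closedBall lam r = {lam}
  then rieszP a lam h.choose else 0

/-- The Aupetit–Mouton spectral rank. -/
noncomputable def sRank [NormedRing A] [NormedAlgebra ℂ A] (a : A) : ℕ∞ :=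
  ⨆ x : A, (spectrum ℂ (x * a) \ {0}).encard

/-- Spectral multiplicity at a nonzero isolated spectral point: rank of the Riesz projection. -/
noncomputable def sMult [NormedRing A] [NormedAlgebra ℂ A] (a : A) (lam : ℂ) : ℕ :=
  (sRank (rieszIdem a lam)).toNat

/-- The Aupetit–Mouton spectral trace. -/
noncomputable def sTrace [NormedRing A] [NormedAlgebra ℂ A] (a : A) : ℂ :=
  ∑ᶠ lam ∈ spectrum ℂ a \ {0}, lam * (sMult a lam : ℂ)

/-- `det(1 + λ a)`, the Aupetit–Mouton spectral determinant. -/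
noncomputable def sDet [NormedRing A] [NormedAlgebra ℂ A] (a : A) (lam : ℂ) : ℂ :=
  ∏ᶠ mu ∈ spectrum ℂ a \ {0}, (1 + lam * mu) ^ sMult a mu

/-- The socle: the sum of all minimal left ideals. -/
def socle (A : Type*) [Ring A] : Ideal A := sSup {I : Ideal A | IsAtom I}

/-- Semisimplicity: the Jacobson radical is zero. -/
def IsSemisimpleBA (A : Type*) [Ring A] : Prop := Ideal.jacobson (⊥ : Ideal A) = ⊥

lemma Cop_pow_one [NormedRing A] [NormedAlgebra ℂ A] (a b : A) (n : ℕ) :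
    (Cop a b ^ n) 1 = ∑ k ∈ Finset.range (n + 1),
      (n.choose k) • (a ^ k * (-b) ^ (n - k)) := by
  have hC : Cop a b = LinearMap.mulLeft ℂ a + LinearMap.mulRight ℂ (-b) := by
    unfold Cop
    ext x
    simp [sub_eq_add_neg, mul_neg]
  have hcomm : Commute (LinearMap.mulLeft ℂ a) (LinearMap.mulRight ℂ (-b)) :=
    LinearMap.commute_mulLeft_right a (-b)
  rw [hC, hcomm.add_pow']
  rw [Finset.Nat.sum_antidiagonal_eq_sum_range_succ (fun k l =>
    (n.choose k) • (LinearMap.mulLeft ℂ a ^ k * LinearMap.mulRight ℂ (-b) ^ l))]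
  rw [LinearMap.sum_apply]
  refine Finset.sum_congr rfl fun k _ => ?_
  simp [LinearMap.pow_mulLeft, LinearMap.pow_mulRight, Module.End.mul_apply]

lemma key_identity [NormedRing A] [NormedAlgebra ℂ A] (a b : A) (lam : ℂ) (n : ℕ) :
    (lam ^ n / (n.factorial : ℂ)) • (Cop a b ^ n) 1 =
      ∑ k ∈ Finset.range (n + 1),
        (((k.factorial : ℂ))⁻¹ • (lam • a) ^ k) *
          (((n - k).factorial : ℂ))⁻¹ • (-(lam • b)) ^ (n - k) := by
  rw [Cop_pow_one, Finset.smul_sum]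
  refine Finset.sum_congr rfl fun k hk => ?_
  have hkn : k ≤ n := Nat.lt_succ_iff.mp (Finset.mem_range.mp hk)
  have h1 : (-(lam • b)) = lam • (-b) := by rw [smul_neg]
  rw [h1, smul_pow, smul_pow, smul_comm ((k.factorial : ℂ))⁻¹, smul_smul,
    Algebra.smul_mul_assoc, Algebra.mul_smul_comm, Algebra.mul_smul_comm, smul_smul, smul_smul,
    ← Nat.cast_smul_eq_nsmul ℂ (n.choose k), smul_smul]
  congr 1
  rw [Nat.cast_choose ℂ hkn]
  have h2 : (k.factorial : ℂ) ≠ 0 := Nat.cast_ne_zero.mpr k.factorial_ne_zero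
  have h3 : ((n - k).factorial : ℂ) ≠ 0 := Nat.cast_ne_zero.mpr (n - k).factorial_ne_zero
  have h4 : (n.factorial : ℂ) ≠ 0 := Nat.cast_ne_zero.mpr n.factorial_ne_zero
  field_simp
  rw [← pow_add, Nat.add_sub_cancel' hkn]

theorem stmt2 [NormedRing A] [NormedAlgebra ℂ A] [CompleteSpace A] (a b : A) (lam : ℂ) :
    (Summable fun j : ℕ => ‖(lam ^ j / (j.factorial : ℂ)) • (Cop a b ^ j) 1‖) ∧
    HasSum (fun j : ℕ => (lam ^ j / (j.factorial : ℂ)) • (Cop a b ^ j) 1)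
      (NormedSpace.exp (lam • a) * NormedSpace.exp (-(lam • b))) := by
  set f := fun k : ℕ => ((k.factorial : ℂ))⁻¹ • (lam • a) ^ k with hf
  set g := fun k : ℕ => ((k.factorial : ℂ))⁻¹ • (-(lam • b)) ^ k with hg
  have hfn : Summable fun n => ‖f n‖ := NormedSpace.norm_expSeries_summable' (lam • a)
  have hgn : Summable fun n => ‖g n‖ := NormedSpace.norm_expSeries_summable' (-(lam • b))
  have hkey : (fun j : ℕ => (lam ^ j / (j.factorial : ℂ)) • (Cop a b ^ j) 1) =
      fun n => ∑ k ∈ Finset.range (n + 1), f k * g (n - k) :=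
    funext fun n => key_identity a b lam n
  constructor
  · exact (summable_norm_sum_mul_range_of_summable_norm hfn hgn).congr
      fun n => congrArg norm (key_identity a b lam n).symm
  · have h1 := hasSum_sum_range_mul_of_summable_norm hfn hgn
    rw [hkey]
    rwa [(NormedSpace.exp_series_hasSum_exp' (lam • a)).tsum_eq,
      (NormedSpace.exp_series_hasSum_exp' (-(lam • b))).tsum_eq] at h1
end

section
/- Let A be a unital complex Banach algebra, a, b ∈ A, and let q, r ∈ A be quasinilpotent elements with qa = aq and rb = br. Then ρ(a+q, b+r) = ρ(a,b). -/
open Filter Metric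

variable {A : Type*}

open scoped Topology

section Aux

variable [NormedRing A] [NormedAlgebra ℂ A]

lemma Cop_add' (a b q r : A) : Cop (a + q) (b + r) = Cop a b + Cop q r := by
  ext z
  simp only [Cop, LinearMap.sub_apply, LinearMap.add_apply, LinearMap.mulLeft_apply,
    LinearMap.mulRight_apply]
  noncomm_ring

lemma Cop_commute' (a b q r : A)
    (hqa : Commute q a) (hrb : Commute r b) : Commute (Cop a b) (Cop q r) := by
  have h1 := hqa.eq
  have h2 := hrb.eq
  ext z
  simp only [Commute, SemiconjBy] at *
  simp only [Module.End.mul_apply, Cop, LinearMap.sub_apply, LinearMap.mulLeft_apply,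
    LinearMap.mulRight_apply, mul_sub, sub_mul, ← mul_assoc]
  rw [← h1, mul_assoc z r b, h2, ← mul_assoc]
  abel

lemma neg_pow_apply_norm' (g : Module.End ℂ A) (m : ℕ) (z : A) :
    ‖((-g) ^ m) z‖ = ‖(g ^ m) z‖ := by
  rw [neg_pow]
  rcases Nat.even_or_odd m with h | h
  · rw [h.neg_one_pow, one_mul]
  · rw [h.neg_one_pow, neg_one_mul, LinearMap.neg_apply, norm_neg]

lemma exists_bound' (v : ℕ → ℝ) (hv : ∀ n, 0 ≤ v n) (c : ℝ) (hc : 0 < c)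
    (h : ∀ᶠ n : ℕ in atTop, v n ^ (1/(n:ℝ)) ≤ c) :
    ∃ M : ℝ, 1 ≤ M ∧ ∀ n, v n ≤ M * c ^ n := by
  obtain ⟨N, hN⟩ := eventually_atTop.mp h
  refine ⟨1 + ∑ i ∈ Finset.range (N+1), v i / c ^ i, ?_, ?_⟩
  · have : 0 ≤ ∑ i ∈ Finset.range (N+1), v i / c ^ i :=
      Finset.sum_nonneg fun i _ => div_nonneg (hv i) (pow_pos hc i).le
    linarith
  · intro n
    rcases le_or_gt n N with hn | hn
    · have h1 : v n / c ^ n ≤ ∑ i ∈ Finset.range (N+1), v i / c ^ i :=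
        Finset.single_le_sum (fun i _ => div_nonneg (hv i) (pow_pos hc i).le)
          (Finset.mem_range.mpr (by omega))
      rw [div_le_iff₀ (pow_pos hc n)] at h1
      nlinarith [pow_pos hc n]
    · have h1 : v n ≤ c ^ n := by
        have h2 := hN n (by omega)
        have h3 : (v n ^ (1/(n:ℝ))) ^ n ≤ c ^ n :=
          pow_le_pow_left₀ (Real.rpow_nonneg (hv n) _) h2 n
        have h4 : (v n ^ (1/(n:ℝ))) ^ n = v n := by
          rw [← Real.rpow_natCast (v n ^ (1/(n:ℝ))) n, ← Real.rpow_mul (hv n),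
            one_div_mul_cancel (by exact_mod_cast by omega : (n:ℝ) ≠ 0), Real.rpow_one]
        rwa [h4] at h3
      have : 0 ≤ ∑ i ∈ Finset.range (N+1), v i / c ^ i :=
        Finset.sum_nonneg fun i _ => div_nonneg (hv i) (pow_pos hc i).le
      nlinarith [pow_pos hc n]

lemma qnil_bound' [CompleteSpace A]
    (q : A) (hq : spectrum ℂ q = {0}) {ε : ℝ} (hε : 0 < ε) :
    ∃ M : ℝ, 1 ≤ M ∧ ∀ n, ‖q ^ n‖ ≤ M * ε ^ n := by
  have hsr : spectralRadius ℂ q = 0 := by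
    rw [spectralRadius, hq]; simp
  have h := spectrum.pow_norm_pow_one_div_tendsto_nhds_spectralRadius q
  rw [hsr] at h
  have hev : ∀ᶠ n : ℕ in atTop, ‖q ^ n‖ ^ (1/(n:ℝ)) ≤ ε := by
    have h2 := h.eventually_lt_const
      (show (0:ENNReal) < ENNReal.ofReal ε from ENNReal.ofReal_pos.mpr hε)
    filter_upwards [h2] with n hn
    exact le_of_lt ((ENNReal.ofReal_lt_ofReal_iff hε).mp hn)
  exact exists_bound' _ (fun n => norm_nonneg _) ε hε hev

lemma Npow_bound' (q r : A) {Mq Mr ε : ℝ}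
    (hMq : 0 ≤ Mq) (hMr : 0 ≤ Mr) (hε : 0 ≤ ε)
    (hq : ∀ n, ‖q ^ n‖ ≤ Mq * ε ^ n) (hr : ∀ n, ‖r ^ n‖ ≤ Mr * ε ^ n) (j : ℕ) (z : A) :
    ‖((Cop q r) ^ j) z‖ ≤ Mq * Mr * (2*ε) ^ j * ‖z‖ := by
  have hcomm : Commute (LinearMap.mulLeft ℂ q) (-(LinearMap.mulRight ℂ r)) :=
    (LinearMap.commute_mulLeft_right (R := ℂ) q r).neg_right
  have hC : Cop q r = LinearMap.mulLeft ℂ q + (-(LinearMap.mulRight ℂ r)) := by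
    rw [Cop, sub_eq_add_neg]
  rw [hC, hcomm.add_pow, LinearMap.sum_apply]
  refine le_trans (norm_sum_le _ _) ?_
  have key : ∀ i ∈ Finset.range (j+1),
      ‖((LinearMap.mulLeft ℂ q ^ i * (-(LinearMap.mulRight ℂ r)) ^ (j-i) *
          (j.choose i : Module.End ℂ A))) z‖ ≤
        (Mq * Mr * ‖z‖) * (ε ^ i * ε ^ (j-i) * (j.choose i : ℝ)) := by
    intro i _
    have h1 : ((LinearMap.mulLeft ℂ q ^ i * (-(LinearMap.mulRight ℂ r)) ^ (j-i) *
        (j.choose i : Module.End ℂ A))) z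
        = (j.choose i) • ((LinearMap.mulLeft ℂ q ^ i)
            (((-(LinearMap.mulRight ℂ r)) ^ (j-i)) z)) := by
      simp only [Module.End.mul_apply, Module.End.natCast_apply]
      rw [map_nsmul, map_nsmul]
    rw [h1]
    refine le_trans norm_nsmul_le ?_
    have h2 : ‖(LinearMap.mulLeft ℂ q ^ i) (((-(LinearMap.mulRight ℂ r)) ^ (j-i)) z)‖
        ≤ ‖q ^ i‖ * (‖z‖ * ‖r ^ (j-i)‖) := by
      rw [LinearMap.pow_mulLeft, LinearMap.mulLeft_apply]
      refine le_trans (norm_mul_le _ _) ?_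
      refine mul_le_mul_of_nonneg_left ?_ (norm_nonneg _)
      rw [neg_pow_apply_norm', LinearMap.pow_mulRight, LinearMap.mulRight_apply]
      exact norm_mul_le _ _
    have inner : ‖q ^ i‖ * (‖z‖ * ‖r ^ (j-i)‖) ≤ (Mq * ε ^ i) * (‖z‖ * (Mr * ε ^ (j-i))) :=
      mul_le_mul (hq i) (mul_le_mul_of_nonneg_left (hr _) (norm_nonneg z))
        (mul_nonneg (norm_nonneg _) (norm_nonneg _)) (mul_nonneg hMq (pow_nonneg hε i))
    calc (j.choose i : ℝ) *
          ‖(LinearMap.mulLeft ℂ q ^ i) (((-(LinearMap.mulRight ℂ r)) ^ (j-i)) z)‖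
        ≤ (j.choose i : ℝ) * (‖q ^ i‖ * (‖z‖ * ‖r ^ (j-i)‖)) :=
          mul_le_mul_of_nonneg_left h2 (Nat.cast_nonneg _)
      _ ≤ (j.choose i : ℝ) * ((Mq * ε ^ i) * (‖z‖ * (Mr * ε ^ (j-i)))) :=
          mul_le_mul_of_nonneg_left inner (Nat.cast_nonneg _)
      _ = (Mq * Mr * ‖z‖) * (ε ^ i * ε ^ (j-i) * (j.choose i : ℝ)) := by ring
  refine le_trans (Finset.sum_le_sum key) ?_
  rw [← Finset.mul_sum, ← add_pow]
  have h5 : ε + ε = 2 * ε := by ring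
  rw [h5]
  ring_nf
  exact le_refl _

lemma Cop_pow_one_le (a b : A) (n : ℕ) :
    ‖((Cop a b) ^ n) 1‖ ≤ (‖a‖ + ‖b‖ + 1) ^ n * ‖(1:A)‖ := by
  induction n with
  | zero => simp
  | succ n ih =>
    have step : ∀ z : A, ‖(Cop a b) z‖ ≤ (‖a‖ + ‖b‖ + 1) * ‖z‖ := by
      intro z
      simp only [Cop, LinearMap.sub_apply, LinearMap.mulLeft_apply, LinearMap.mulRight_apply]
      calc ‖a * z - z * b‖ ≤ ‖a * z‖ + ‖z * b‖ := norm_sub_le _ _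
        _ ≤ ‖a‖ * ‖z‖ + ‖z‖ * ‖b‖ := add_le_add (norm_mul_le _ _) (norm_mul_le _ _)
        _ ≤ (‖a‖ + ‖b‖ + 1) * ‖z‖ := by nlinarith [norm_nonneg z, norm_nonneg a, norm_nonneg b]
    calc ‖((Cop a b) ^ (n+1)) 1‖ = ‖(Cop a b) (((Cop a b) ^ n) 1)‖ := by
          rw [pow_succ' (Cop a b) n, Module.End.mul_apply]
      _ ≤ (‖a‖ + ‖b‖ + 1) * ‖((Cop a b) ^ n) 1‖ := step _
      _ ≤ (‖a‖ + ‖b‖ + 1) * ((‖a‖ + ‖b‖ + 1) ^ n * ‖(1:A)‖) := by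
          refine mul_le_mul_of_nonneg_left ih ?_
          nlinarith [norm_nonneg a, norm_nonneg b]
      _ = (‖a‖ + ‖b‖ + 1) ^ (n+1) * ‖(1:A)‖ := by ring

lemma rho_bdd' (a b : A) :
    IsBoundedUnder (· ≤ ·) atTop (fun n : ℕ => ‖((Cop a b) ^ n) 1‖ ^ (1/(n:ℝ))) := by
  set K : ℝ := ‖a‖ + ‖b‖ + 1 with hK
  have hK1 : 1 ≤ K := by
    have := norm_nonneg a; have := norm_nonneg b; simp [hK]; linarith
  have hK0 : 0 < K := lt_of_lt_of_le one_pos hK1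
  refine isBoundedUnder_of ⟨max 1 (K * max 1 ‖(1:A)‖), fun n => ?_⟩
  rcases Nat.eq_zero_or_pos n with hn | hn
  · subst hn
    simp [Real.rpow_zero]
  · have hn1 : (1:ℝ) ≤ n := by exact_mod_cast hn
    have hnne : (n:ℝ) ≠ 0 := by positivity
    have h1 : ‖((Cop a b) ^ n) 1‖ ^ (1/(n:ℝ)) ≤ (K ^ n * ‖(1:A)‖) ^ (1/(n:ℝ)) :=
      Real.rpow_le_rpow (norm_nonneg _) (Cop_pow_one_le a b n) (by positivity)
    have h2 : (K ^ n * ‖(1:A)‖) ^ (1/(n:ℝ)) = (K ^ n) ^ (1/(n:ℝ)) * ‖(1:A)‖ ^ (1/(n:ℝ)) :=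
      Real.mul_rpow (by positivity) (norm_nonneg _)
    have h3 : (K ^ n : ℝ) ^ (1/(n:ℝ)) = K := by
      rw [← Real.rpow_natCast K n, ← Real.rpow_mul hK0.le,
        mul_one_div_cancel hnne, Real.rpow_one]
    have h4 : ‖(1:A)‖ ^ (1/(n:ℝ)) ≤ max 1 ‖(1:A)‖ := by
      rcases le_total ‖(1:A)‖ 1 with h | h
      · exact le_trans (Real.rpow_le_one (norm_nonneg _) h (by positivity)) (le_max_left _ _)
      · refine le_trans ?_ (le_max_right _ _)
        calc ‖(1:A)‖ ^ (1/(n:ℝ)) ≤ ‖(1:A)‖ ^ (1:ℝ) := by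
              refine Real.rpow_le_rpow_of_exponent_le h ?_
              rw [div_le_one (by positivity)]; exact hn1
          _ = ‖(1:A)‖ := Real.rpow_one _
    calc ‖((Cop a b) ^ n) 1‖ ^ (1/(n:ℝ)) ≤ K * (‖(1:A)‖ ^ (1/(n:ℝ))) := by
          rw [h2, h3] at h1; exact h1
      _ ≤ K * max 1 ‖(1:A)‖ := mul_le_mul_of_nonneg_left h4 hK0.le
      _ ≤ max 1 (K * max 1 ‖(1:A)‖) := le_max_right _ _

lemma rho_nonneg' (a b : A) : 0 ≤ rho a b := by
  refine le_limsup_of_frequently_le ?_ (rho_bdd' a b)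
  exact Frequently.of_forall fun n => Real.rpow_nonneg (norm_nonneg _) _

lemma rho_add_le' [CompleteSpace A] (a b q r : A)
    (hq : spectrum ℂ q = {0}) (hr : spectrum ℂ r = {0})
    (hqa : Commute q a) (hrb : Commute r b) :
    rho (a + q) (b + r) ≤ rho a b := by
  have main : ∀ ε : ℝ, 0 < ε → rho (a + q) (b + r) ≤ rho a b + ε := by
    intro ε hε
    set δ := ε / 2 with hδdef
    have hδ : 0 < δ := by positivity
    have hρ0 := rho_nonneg' a b
    have hrho : rho a b = limsup (fun n : ℕ => ‖((Cop a b) ^ n) 1‖ ^ (1/(n:ℝ))) atTop := rfl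
    have hev : ∀ᶠ n : ℕ in atTop, ‖((Cop a b) ^ n) 1‖ ^ (1/(n:ℝ)) ≤ rho a b + δ := by
      have hlt : limsup (fun n : ℕ => ‖((Cop a b) ^ n) 1‖ ^ (1/(n:ℝ))) atTop < rho a b + δ := by
        rw [← hrho]; linarith
      exact (eventually_lt_of_limsup_lt hlt (rho_bdd' a b)).mono fun n h => h.le
    obtain ⟨M₁, hM₁1, hM₁⟩ := exists_bound' _ (fun n => norm_nonneg _) (rho a b + δ)
      (by linarith) hev
    obtain ⟨M₂, hM₂1, hM₂⟩ := qnil_bound' q hq (half_pos hδ)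
    obtain ⟨M₃, hM₃1, hM₃⟩ := qnil_bound' r hr (half_pos hδ)
    have hN : ∀ j (z : A), ‖((Cop q r) ^ j) z‖ ≤ M₂ * M₃ * δ ^ j * ‖z‖ := by
      intro j z
      have h := Npow_bound' q r (le_trans zero_le_one hM₂1) (le_trans zero_le_one hM₃1)
        (half_pos hδ).le hM₂ hM₃ j z
      rwa [show 2 * (δ/2) = δ by ring] at h
    have hcomm := Cop_commute' a b q r hqa hrb
    have key : ∀ n, ‖((Cop (a+q) (b+r)) ^ n) 1‖ ≤ (M₂ * M₃ * M₁) * (rho a b + 2*δ) ^ n := by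
      intro n
      rw [Cop_add', add_comm (Cop a b), hcomm.symm.add_pow, LinearMap.sum_apply]
      refine le_trans (norm_sum_le _ _) ?_
      have hterm : ∀ k ∈ Finset.range (n+1),
          ‖((Cop q r ^ k * Cop a b ^ (n-k) * (n.choose k : Module.End ℂ A))) 1‖ ≤
          (M₂ * M₃ * M₁) * (δ ^ k * (rho a b + δ) ^ (n-k) * (n.choose k : ℝ)) := by
        intro k _
        have h1 : ((Cop q r ^ k * Cop a b ^ (n-k) * (n.choose k : Module.End ℂ A))) 1
            = (n.choose k) • ((Cop q r ^ k) ((Cop a b ^ (n-k)) 1)) := by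
          simp only [Module.End.mul_apply, Module.End.natCast_apply]
          rw [map_nsmul, map_nsmul]
        rw [h1]
        refine le_trans norm_nsmul_le ?_
        have h23 : (0:ℝ) ≤ M₂ * M₃ * δ ^ k := by positivity
        calc (n.choose k : ℝ) * ‖(Cop q r ^ k) ((Cop a b ^ (n-k)) 1)‖
            ≤ (n.choose k : ℝ) * (M₂ * M₃ * δ ^ k * ‖(Cop a b ^ (n-k)) 1‖) :=
              mul_le_mul_of_nonneg_left (hN k _) (Nat.cast_nonneg _)
          _ ≤ (n.choose k : ℝ) * (M₂ * M₃ * δ ^ k * (M₁ * (rho a b + δ) ^ (n-k))) :=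
              mul_le_mul_of_nonneg_left
                (mul_le_mul_of_nonneg_left (hM₁ _) h23) (Nat.cast_nonneg _)
          _ = (M₂ * M₃ * M₁) * (δ ^ k * (rho a b + δ) ^ (n-k) * (n.choose k : ℝ)) := by ring
      refine le_trans (Finset.sum_le_sum hterm) ?_
      rw [← Finset.mul_sum, ← add_pow]
      have h6 : δ + (rho a b + δ) = rho a b + 2*δ := by ring
      rw [h6]
    set T := rho a b + 2*δ with hT
    have hT0 : 0 < T := by rw [hT]; linarith
    have h23' : (1:ℝ) ≤ M₂ * M₃ := by nlinarith
    have hM : (1:ℝ) ≤ M₂ * M₃ * M₁ := by nlinarith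
    have hw : Tendsto (fun n : ℕ => (M₂ * M₃ * M₁) ^ (1/(n:ℝ)) * T) atTop (𝓝 T) := by
      have hc : ContinuousAt (fun x : ℝ => (M₂ * M₃ * M₁) ^ x) 0 :=
        Real.continuousAt_const_rpow (by linarith)
      have h1 : Tendsto (fun n : ℕ => (M₂ * M₃ * M₁) ^ (1/(n:ℝ))) atTop (𝓝 1) := by
        have h2 := hc.tendsto.comp tendsto_one_div_atTop_nhds_zero_nat
        simpa [Real.rpow_zero, Function.comp_def] using h2
      simpa using h1.mul_const T
    have hle : ∀ᶠ n : ℕ in atTop,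
        ‖((Cop (a+q) (b+r)) ^ n) 1‖ ^ (1/(n:ℝ)) ≤ (M₂ * M₃ * M₁) ^ (1/(n:ℝ)) * T := by
      filter_upwards [eventually_ge_atTop 1] with n hn
      have hnne : (n:ℝ) ≠ 0 := by
        have : (1:ℝ) ≤ n := by exact_mod_cast hn
        linarith
      have h1 : ‖((Cop (a+q) (b+r)) ^ n) 1‖ ^ (1/(n:ℝ)) ≤ ((M₂ * M₃ * M₁) * T ^ n) ^ (1/(n:ℝ)) :=
        Real.rpow_le_rpow (norm_nonneg _) (key n) (by positivity)
      rw [Real.mul_rpow (by linarith) (pow_nonneg hT0.le n)] at h1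
      have h2 : ((T:ℝ) ^ n) ^ (1/(n:ℝ)) = T := by
        rw [← Real.rpow_natCast T n, ← Real.rpow_mul hT0.le,
          mul_one_div_cancel hnne, Real.rpow_one]
      rwa [h2] at h1
    have hco : IsCoboundedUnder (· ≤ ·) atTop
        (fun n : ℕ => ‖((Cop (a+q) (b+r)) ^ n) 1‖ ^ (1/(n:ℝ))) :=
      isCoboundedUnder_le_of_le atTop fun n => Real.rpow_nonneg (norm_nonneg _) _
    have hfin : rho (a+q) (b+r) ≤ T := by
      have h3 := limsup_le_limsup hle hco hw.isBoundedUnder_le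
      rwa [hw.limsup_eq] at h3
    rw [hT, hδdef] at hfin
    linarith
  by_contra hcon
  push_neg at hcon
  have := main ((rho (a+q) (b+r) - rho a b)/2) (by linarith)
  linarith

end Aux

theorem stmt5 [NormedRing A] [NormedAlgebra ℂ A] [CompleteSpace A] (a b q r : A)
    (hq : spectrum ℂ q = {0}) (hr : spectrum ℂ r = {0})
    (hqa : Commute q a) (hrb : Commute r b) :
    rho (a + q) (b + r) = rho a b := by
  refine le_antisymm (rho_add_le' a b q r hq hr hqa hrb) ?_
  have hq' : spectrum ℂ (-q) = {0} := by
    rw [← spectrum.neg_eq, hq]; simp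
  have hr' : spectrum ℂ (-r) = {0} := by
    rw [← spectrum.neg_eq, hr]; simp
  have h := rho_add_le' (a+q) (b+r) (-q) (-r) hq' hr'
    ((hqa.add_right (Commute.refl q)).neg_left)
    ((hrb.add_right (Commute.refl r)).neg_left)
  simpa using h
end

section
/- Let A be a unital complex Banach algebra and a, b ∈ A with ρ(a,b) = 0. Then for every k ∈ ℕ, ρ(a^k, b^k) = 0. -/
open Filter Metric

variable {A : Type*}

private lemma aux_rpow {x y : ℝ} (hx : 0 ≤ x) (hy : 0 ≤ y) {n : ℕ} (hn : n ≠ 0) :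
    (x ^ n * y) ^ (1 / (n : ℝ)) = x * y ^ (1 / (n : ℝ)) := by
  rw [Real.mul_rpow (pow_nonneg hx n) hy, ← Real.rpow_natCast x n,
    ← Real.rpow_mul hx, mul_one_div_cancel (by exact_mod_cast hn), Real.rpow_one]

theorem stmt6 [NormedRing A] [NormedAlgebra ℂ A] (a b : A) (h : rho a b = 0) (k : ℕ) :
    rho (a ^ k) (b ^ k) = 0 := by
  set L := LinearMap.mulLeft ℂ a with hL
  set R := LinearMap.mulRight ℂ b with hR
  have hLR : Commute L R := LinearMap.commute_mulLeft_right a b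
  set C := Cop a b with hC
  set P : Module.End ℂ A := ∑ i ∈ Finset.range k, L ^ i * R ^ (k - 1 - i) with hP
  -- key factorization
  have hkey : Cop (a ^ k) (b ^ k) = P * C := by
    rw [Cop, ← LinearMap.pow_mulLeft, ← LinearMap.pow_mulRight, hC, Cop, hP]
    exact (hLR.geom_sum₂_mul k).symm
  -- P commutes with C
  have hPC : Commute P C := by
    apply Commute.sum_left
    intro i _
    exact (((Commute.refl L).pow_left i).sub_right (hLR.pow_left i)).mul_left
      (((hLR.symm).pow_left _).sub_right ((Commute.refl R).pow_left _))
  set M : ℝ := ∑ i ∈ Finset.range k, ‖a ^ i‖ * ‖b ^ (k - 1 - i)‖ with hMdef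
  have hM0 : 0 ≤ M := Finset.sum_nonneg fun i _ => mul_nonneg (norm_nonneg _) (norm_nonneg _)
  have hPz : ∀ z : A, ‖P z‖ ≤ M * ‖z‖ := by
    intro z
    rw [hP, hMdef, LinearMap.sum_apply, Finset.sum_mul]
    refine (norm_sum_le _ _).trans (Finset.sum_le_sum fun i _ => ?_)
    rw [Module.End.mul_apply, hL, hR, LinearMap.pow_mulLeft, LinearMap.pow_mulRight,
      LinearMap.mulLeft_apply, LinearMap.mulRight_apply]
    calc ‖a ^ i * (z * b ^ (k - 1 - i))‖ ≤ ‖a ^ i‖ * (‖z‖ * ‖b ^ (k - 1 - i)‖) :=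
          (norm_mul_le _ _).trans (by gcongr; exact norm_mul_le _ _)
      _ = ‖a ^ i‖ * ‖b ^ (k - 1 - i)‖ * ‖z‖ := by ring
  have hPn : ∀ (n : ℕ) (z : A), ‖(P ^ n) z‖ ≤ M ^ n * ‖z‖ := by
    intro n
    induction n with
    | zero => simp
    | succ m ih =>
      intro z
      rw [pow_succ, Module.End.mul_apply]
      calc ‖(P ^ m) (P z)‖ ≤ M ^ m * ‖P z‖ := ih _
        _ ≤ M ^ m * (M * ‖z‖) := mul_le_mul_of_nonneg_left (hPz z) (pow_nonneg hM0 m)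
        _ = M ^ (m + 1) * ‖z‖ := by ring
  -- bound for C
  set s : ℝ := ‖a‖ + ‖b‖ with hs
  have hs0 : 0 ≤ s := by positivity
  have hCz : ∀ z : A, ‖C z‖ ≤ s * ‖z‖ := by
    intro z
    rw [hC, Cop, LinearMap.sub_apply, LinearMap.mulLeft_apply, LinearMap.mulRight_apply]
    calc ‖a * z - z * b‖ ≤ ‖a * z‖ + ‖z * b‖ := norm_sub_le _ _
      _ ≤ ‖a‖ * ‖z‖ + ‖z‖ * ‖b‖ := add_le_add (norm_mul_le _ _) (norm_mul_le _ _)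
      _ = s * ‖z‖ := by rw [hs]; ring
  have hCn : ∀ n : ℕ, ‖(C ^ n) (1 : A)‖ ≤ s ^ n * ‖(1 : A)‖ := by
    intro n
    induction n with
    | zero => simp
    | succ m ih =>
      rw [pow_succ']
      calc ‖(C * C ^ m) (1 : A)‖ = ‖C ((C ^ m) 1)‖ := by rw [Module.End.mul_apply]
        _ ≤ s * ‖(C ^ m) (1 : A)‖ := hCz _
        _ ≤ s * (s ^ m * ‖(1 : A)‖) := by gcongr
        _ = s ^ (m + 1) * ‖(1 : A)‖ := by ring
  -- the functions
  set g : ℕ → ℝ := fun n => ‖(C ^ n) (1 : A)‖ ^ (1 / (n : ℝ)) with hg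
  set f : ℕ → ℝ := fun n => ‖(Cop (a ^ k) (b ^ k) ^ n) (1 : A)‖ ^ (1 / (n : ℝ)) with hf
  have hg0 : ∀ n, 0 ≤ g n := fun n => Real.rpow_nonneg (norm_nonneg _) _
  have hf0 : ∀ n, 0 ≤ f n := fun n => Real.rpow_nonneg (norm_nonneg _) _
  have hfg : ∀ n : ℕ, n ≠ 0 → f n ≤ M * g n := by
    intro n hn
    have h1 : ‖(Cop (a ^ k) (b ^ k) ^ n) (1 : A)‖ ≤ M ^ n * ‖(C ^ n) (1 : A)‖ := by
      rw [hkey, hPC.mul_pow, Module.End.mul_apply]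
      exact hPn n _
    calc f n ≤ (M ^ n * ‖(C ^ n) (1 : A)‖) ^ (1 / (n : ℝ)) :=
          Real.rpow_le_rpow (norm_nonneg _) h1 (by positivity)
      _ = M * g n := aux_rpow hM0 (norm_nonneg _) hn
  -- bound for g
  set B : ℝ := s * max 1 ‖(1 : A)‖ with hB
  have hgB : ∀ n : ℕ, n ≠ 0 → g n ≤ B := by
    intro n hn
    have hn1 : (1 : ℝ) ≤ n := by exact_mod_cast Nat.one_le_iff_ne_zero.2 hn
    calc g n ≤ (s ^ n * ‖(1 : A)‖) ^ (1 / (n : ℝ)) :=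
          Real.rpow_le_rpow (norm_nonneg _) (hCn n) (by positivity)
      _ = s * ‖(1 : A)‖ ^ (1 / (n : ℝ)) := aux_rpow hs0 (norm_nonneg _) hn
      _ ≤ s * max 1 ‖(1 : A)‖ := by
          gcongr s * ?_
          rcases le_total ‖(1 : A)‖ 1 with ht | ht
          · exact (Real.rpow_le_one (norm_nonneg _) ht (by positivity)).trans (le_max_left _ _)
          · refine le_trans ?_ (le_max_right _ _)
            calc ‖(1 : A)‖ ^ (1 / (n : ℝ)) ≤ ‖(1 : A)‖ ^ (1 : ℝ) :=
                  Real.rpow_le_rpow_of_exponent_le ht (by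
                    rw [div_le_one (by linarith)]; exact hn1)
              _ = ‖(1 : A)‖ := Real.rpow_one _
  have hB0 : 0 ≤ B := mul_nonneg hs0 (le_trans zero_le_one (le_max_left _ _))
  have hgBdd : IsBoundedUnder (· ≤ ·) atTop g :=
    isBoundedUnder_of_eventually_le (a := B)
      ((eventually_ne_atTop 0).mono fun n hn => hgB n hn)
  have hfBdd : IsBoundedUnder (· ≤ ·) atTop f :=
    isBoundedUnder_of_eventually_le (a := M * B)
      ((eventually_ne_atTop 0).mono fun n hn =>
        (hfg n hn).trans (by gcongr; exact hgB n hn))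
  have hfCobdd : IsCoboundedUnder (· ≤ ·) atTop f :=
    (isBoundedUnder_of_eventually_ge (a := (0 : ℝ))
      (Eventually.of_forall hf0)).isCoboundedUnder_le
  have hrho_g : limsup g atTop = 0 := h
  have hupper : limsup f atTop ≤ 0 := by
    by_contra hcon
    push_neg at hcon
    set ε := limsup f atTop with hε
    set M' : ℝ := max M 1 with hM'
    have hM'0 : 0 < M' := lt_of_lt_of_le one_pos (le_max_right _ _)
    have hsmall : ∀ᶠ n in atTop, g n < ε / 2 / M' := by
      apply eventually_lt_of_limsup_lt _ hgBdd
      rw [hrho_g]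
      positivity
    have hev : ∀ᶠ n in atTop, f n ≤ ε / 2 := by
      filter_upwards [hsmall, eventually_ne_atTop 0] with n hgs hn
      calc f n ≤ M * g n := hfg n hn
        _ ≤ M' * g n := by gcongr; exact le_max_left _ _
        _ ≤ M' * (ε / 2 / M') := mul_le_mul_of_nonneg_left hgs.le hM'0.le
        _ = ε / 2 := by rw [mul_comm, div_mul_cancel₀ _ (ne_of_gt hM'0)]
    have := limsup_le_of_le hfCobdd hev
    rw [← hε] at this
    linarith
  have hlower : (0 : ℝ) ≤ limsup f atTop :=
    le_limsup_of_frequently_le ((Eventually.of_forall hf0).frequently) hfBdd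
  have : rho (a ^ k) (b ^ k) = limsup f atTop := rfl
  rw [this]
  linarith
end

section
/- Let A be a semisimple unital complex Banach algebra and a, b ∈ Soc(A). If ρ(a,b) = 0, then the spectral radii of a and b are equal: r(a) = r(b). -/
open Filter Metric

variable {A : Type*}

open Topology
open scoped ENNReal NNReal

section auxlemmas
variable [NormedRing A] [NormedAlgebra ℂ A]

private lemma aux_commCR (a b : A) : Commute (Cop a b) (LinearMap.mulRight ℂ b) :=
  ((LinearMap.commute_mulLeft_right a b).sub_left (Commute.refl _))

private lemma aux_commLC (a b : A) : Commute (LinearMap.mulLeft ℂ a) (Cop a b) :=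
  ((Commute.refl _).sub_right (LinearMap.commute_mulLeft_right a b))

private lemma aux_pow_eq_sum (a b : A) (n : ℕ) :
    a ^ n = ∑ k ∈ Finset.range (n + 1),
      n.choose k • ((Cop a b ^ k) 1 * b ^ (n - k)) := by
  have hL : Cop a b + LinearMap.mulRight ℂ b = LinearMap.mulLeft ℂ a := sub_add_cancel _ _
  have h := (aux_commCR a b).add_pow n
  rw [hL] at h
  have h1 : (LinearMap.mulLeft ℂ a ^ n) (1 : A) = a ^ n := by
    rw [LinearMap.pow_mulLeft, LinearMap.mulLeft_apply, mul_one]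
  rw [← h1, h, LinearMap.sum_apply]
  refine Finset.sum_congr rfl fun k hk => ?_
  rw [((aux_commCR a b).pow_pow k (n - k)).eq]
  rw [Module.End.mul_apply, Module.End.mul_apply, Module.End.natCast_apply,
    map_nsmul, map_nsmul, LinearMap.pow_mulRight, LinearMap.mulRight_apply]

private lemma aux_pow_eq_sum' (a b : A) (n : ℕ) :
    b ^ n = ∑ k ∈ Finset.range (n + 1),
      n.choose k • (a ^ k * ((-Cop a b) ^ (n - k)) 1) := by
  have hR : LinearMap.mulLeft ℂ a + -Cop a b = LinearMap.mulRight ℂ b := by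
    rw [Cop, ← sub_eq_add_neg, sub_sub_cancel]
  have h := ((aux_commLC a b).neg_right).add_pow n
  rw [hR] at h
  have h1 : (LinearMap.mulRight ℂ b ^ n) (1 : A) = b ^ n := by
    rw [LinearMap.pow_mulRight, LinearMap.mulRight_apply, one_mul]
  rw [← h1, h, LinearMap.sum_apply]
  refine Finset.sum_congr rfl fun k hk => ?_
  rw [Module.End.mul_apply, Module.End.mul_apply, Module.End.natCast_apply,
    map_nsmul, map_nsmul, LinearMap.pow_mulLeft, LinearMap.mulLeft_apply]

private lemma aux_norm_negC (a b : A) (m : ℕ) :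
    ‖((-Cop a b) ^ m) 1‖ = ‖(Cop a b ^ m) 1‖ := by
  have : (-Cop a b) = ((-1 : ℂ) • Cop a b) := by rw [neg_smul, one_smul]
  rw [this, smul_pow, LinearMap.smul_apply, norm_smul, norm_pow, norm_neg, norm_one,
    one_pow, one_mul]

private lemma aux_glob {u : ℕ → ℝ} (hu : ∀ n, 0 ≤ u n) {t : ℝ} (ht : 0 < t)
    (h : ∀ᶠ n in atTop, u n ≤ t ^ n) : ∃ M : ℝ, 0 < M ∧ ∀ n, u n ≤ M * t ^ n := by
  obtain ⟨N, hN⟩ := eventually_atTop.mp h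
  set S : ℝ := ∑ k ∈ Finset.range N, u k / t ^ k with hS
  have hS0 : 0 ≤ S := Finset.sum_nonneg fun i _ => div_nonneg (hu i) (pow_pos ht i).le
  refine ⟨1 + S, by linarith, fun n => ?_⟩
  rcases le_or_gt N n with hn | hn
  · calc u n ≤ t ^ n := hN n hn
      _ = 1 * t ^ n := (one_mul _).symm
      _ ≤ (1 + S) * t ^ n := by
          exact mul_le_mul_of_nonneg_right (by linarith) (pow_pos ht n).le
  · have hk : u n / t ^ n ≤ S :=
      Finset.single_le_sum (f := fun i => u i / t ^ i)
        (fun i _ => div_nonneg (hu i) (pow_pos ht i).le) (Finset.mem_range.mpr hn)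
    have : u n = (u n / t ^ n) * t ^ n := by field_simp
    rw [this]
    exact mul_le_mul_of_nonneg_right (by linarith) (pow_pos ht n).le

private lemma aux_sr_le [CompleteSpace A] {a : A} {M c : ℝ}
    (hM : 0 < M) (hc : 0 ≤ c) (h : ∀ n, ‖a ^ n‖ ≤ M * c ^ n) :
    spectralRadius ℂ a ≤ ENNReal.ofReal c := by
  have hT := spectrum.pow_norm_pow_one_div_tendsto_nhds_spectralRadius a
  have h1 : Tendsto (fun n : ℕ => M ^ (1 / (n : ℝ))) atTop (𝓝 1) := by
    have he : ∀ n : ℕ, M ^ (1 / (n : ℝ)) = Real.exp (Real.log M * (1 / (n : ℝ))) := fun n =>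
      Real.rpow_def_of_pos hM _
    simp only [he]
    have h2 : Tendsto (fun n : ℕ => Real.log M * (1 / (n : ℝ))) atTop (𝓝 0) := by
      simpa using (tendsto_one_div_atTop_nhds_zero_nat).const_mul (Real.log M)
    simpa [Function.comp_def] using (Real.continuous_exp.tendsto 0).comp h2
  have hg : Tendsto (fun n : ℕ => ENNReal.ofReal (M ^ (1 / (n : ℝ)) * c)) atTop
      (𝓝 (ENNReal.ofReal c)) := by
    have := (h1.mul (tendsto_const_nhds (x := c)))
    rw [one_mul] at this
    exact (ENNReal.continuous_ofReal.tendsto c).comp this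
  refine le_of_tendsto_of_tendsto hT hg ?_
  filter_upwards [eventually_ge_atTop 1] with n hn
  refine ENNReal.ofReal_le_ofReal ?_
  have hn0 : n ≠ 0 := by omega
  calc ‖a ^ n‖ ^ (1 / (n : ℝ)) ≤ (M * c ^ n) ^ (1 / (n : ℝ)) :=
        Real.rpow_le_rpow (norm_nonneg _) (h n) (by positivity)
    _ = M ^ (1 / (n : ℝ)) * c := by
        rw [Real.mul_rpow hM.le (by positivity), one_div,
          Real.pow_rpow_inv_natCast hc hn0]

private lemma aux_ev_pow_norm [CompleteSpace A] {b : A}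
    {t : ℝ} (ht : 0 ≤ t) (hlt : spectralRadius ℂ b < ENNReal.ofReal t) :
    ∀ᶠ n in atTop, ‖b ^ n‖ ≤ t ^ n := by
  have hT := spectrum.pow_nnnorm_pow_one_div_tendsto_nhds_spectralRadius b
  filter_upwards [hT.eventually_lt_const hlt, eventually_ge_atTop 1] with n h1 hn
  have hn0 : n ≠ 0 := by omega
  have h2 : (‖b ^ n‖₊ : ℝ≥0∞) ≤ (ENNReal.ofReal t) ^ n := by
    calc (‖b ^ n‖₊ : ℝ≥0∞) = ((‖b ^ n‖₊ : ℝ≥0∞) ^ (1 / (n : ℝ))) ^ n := by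
          rw [one_div, ENNReal.rpow_inv_natCast_pow hn0]
      _ ≤ (ENNReal.ofReal t) ^ n := pow_le_pow_left' h1.le n
  rw [← ENNReal.ofReal_pow ht, ← show ENNReal.ofReal ‖b ^ n‖ = (‖b ^ n‖₊ : ℝ≥0∞) from ENNReal.ofReal_eq_coe_nnreal (norm_nonneg _),
    ENNReal.ofReal_le_ofReal_iff (by positivity)] at h2
  exact h2

private lemma aux_rho_ev (a b : A) (h : rho a b = 0) {ε : ℝ} (hε : 0 < ε) :
    ∀ᶠ n in atTop, ‖(Cop a b ^ n) 1‖ ≤ ε ^ n := by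
  set u : ℕ → ℝ := fun n => ‖(Cop a b ^ n) 1‖ ^ (1 / (n : ℝ)) with hu
  set K₁ : ℝ := max (‖a‖ + ‖b‖) 1 with hK₁
  set K₂ : ℝ := max ‖(1 : A)‖ 1 with hK₂
  have hK₁1 : 1 ≤ K₁ := le_max_right _ _
  have hK₂1 : 1 ≤ K₂ := le_max_right _ _
  have hstep : ∀ x : A, ‖Cop a b x‖ ≤ K₁ * ‖x‖ := by
    intro x
    calc ‖Cop a b x‖ = ‖a * x - x * b‖ := by
          simp [Cop, LinearMap.sub_apply]
      _ ≤ ‖a * x‖ + ‖x * b‖ := norm_sub_le _ _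
      _ ≤ ‖a‖ * ‖x‖ + ‖x‖ * ‖b‖ := add_le_add (norm_mul_le _ _) (norm_mul_le _ _)
      _ = (‖a‖ + ‖b‖) * ‖x‖ := by ring
      _ ≤ K₁ * ‖x‖ := mul_le_mul_of_nonneg_right (le_max_left _ _) (norm_nonneg _)
  have hiter : ∀ n : ℕ, ‖(Cop a b ^ n) 1‖ ≤ K₁ ^ n * ‖(1 : A)‖ := by
    intro n
    induction n with
    | zero => simp
    | succ n ih =>
        calc ‖(Cop a b ^ (n + 1)) 1‖ = ‖Cop a b ((Cop a b ^ n) 1)‖ := by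
              rw [pow_succ']; rfl
          _ ≤ K₁ * ‖(Cop a b ^ n) 1‖ := hstep _
          _ ≤ K₁ * (K₁ ^ n * ‖(1 : A)‖) :=
              mul_le_mul_of_nonneg_left ih (by linarith)
          _ = K₁ ^ (n + 1) * ‖(1 : A)‖ := by ring
  have hbdd : IsBoundedUnder (· ≤ ·) atTop u := by
    refine isBoundedUnder_of_eventually_le (a := K₁ * K₂) ?_
    filter_upwards [eventually_ge_atTop 1] with n hn
    have hn0 : n ≠ 0 := by omega
    have hb : ‖(Cop a b ^ n) 1‖ ≤ (K₁ * K₂) ^ n := by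
      calc ‖(Cop a b ^ n) 1‖ ≤ K₁ ^ n * ‖(1 : A)‖ := hiter n
        _ ≤ K₁ ^ n * K₂ ^ n := by
            refine mul_le_mul_of_nonneg_left ?_ (by positivity)
            exact le_trans (le_max_left _ _) (le_self_pow₀ (by linarith) hn0)
        _ = (K₁ * K₂) ^ n := (mul_pow _ _ _).symm
    calc u n ≤ ((K₁ * K₂) ^ n) ^ (1 / (n : ℝ)) :=
          Real.rpow_le_rpow (norm_nonneg _) hb (by positivity)
      _ = K₁ * K₂ := by
          rw [one_div, Real.pow_rpow_inv_natCast (by positivity) hn0]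
  have hev : ∀ᶠ n in atTop, u n < ε :=
    eventually_lt_of_limsup_lt (by rw [show limsup u atTop = rho a b from rfl, h]; exact hε) hbdd
  filter_upwards [hev, eventually_ge_atTop 1] with n h1 hn
  have hn0 : n ≠ 0 := by omega
  calc ‖(Cop a b ^ n) 1‖ = (u n) ^ n := by
        rw [hu]; dsimp only
        rw [one_div, Real.rpow_inv_natCast_pow (norm_nonneg _) hn0]
    _ ≤ ε ^ n := pow_le_pow_left₀ (Real.rpow_nonneg (norm_nonneg _) _) h1.le n

variable [CompleteSpace A]

private lemma aux_main_le (a b : A) (h : rho a b = 0) :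
    spectralRadius ℂ a ≤ spectralRadius ℂ b := by
  refine ENNReal.le_of_forall_pos_le_add fun ε hε hfin => ?_
  set s : ℝ≥0 := (spectralRadius ℂ b).toNNReal with hsdef
  have hs : spectralRadius ℂ b = (s : ℝ≥0∞) := (ENNReal.coe_toNNReal hfin.ne).symm
  set εr : ℝ := (ε : ℝ) / 2 with hεrdef
  have hεr : 0 < εr := by positivity
  set t : ℝ := (s : ℝ) + εr with htdef
  have ht0 : 0 < t := by positivity
  have hlt : spectralRadius ℂ b < ENNReal.ofReal t := by
    rw [hs, ← ENNReal.ofReal_coe_nnreal]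
    exact (ENNReal.ofReal_lt_ofReal_iff ht0).mpr (lt_add_of_pos_right _ hεr)
  obtain ⟨M₂, hM₂, hMb⟩ := aux_glob (fun n => norm_nonneg _) ht0 (aux_ev_pow_norm ht0.le hlt)
  obtain ⟨M₁, hM₁, hMc⟩ := aux_glob (fun n => norm_nonneg _) hεr (aux_rho_ev a b h hεr)
  have hbound : ∀ n, ‖a ^ n‖ ≤ (M₁ * M₂) * (εr + t) ^ n := by
    intro n
    rw [aux_pow_eq_sum a b n]
    calc ‖∑ k ∈ Finset.range (n + 1), n.choose k • ((Cop a b ^ k) 1 * b ^ (n - k))‖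
        ≤ ∑ k ∈ Finset.range (n + 1), ‖n.choose k • ((Cop a b ^ k) 1 * b ^ (n - k))‖ :=
          norm_sum_le _ _
      _ ≤ ∑ k ∈ Finset.range (n + 1),
            (M₁ * M₂) * (εr ^ k * t ^ (n - k) * (n.choose k : ℝ)) := by
          refine Finset.sum_le_sum fun k _ => ?_
          calc ‖n.choose k • ((Cop a b ^ k) 1 * b ^ (n - k))‖
              ≤ (n.choose k : ℝ) * ‖(Cop a b ^ k) 1 * b ^ (n - k)‖ := norm_nsmul_le
            _ ≤ (n.choose k : ℝ) * (‖(Cop a b ^ k) 1‖ * ‖b ^ (n - k)‖) :=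
                mul_le_mul_of_nonneg_left (norm_mul_le _ _) (by positivity)
            _ ≤ (n.choose k : ℝ) * ((M₁ * εr ^ k) * (M₂ * t ^ (n - k))) := by
                refine mul_le_mul_of_nonneg_left ?_ (by positivity)
                exact mul_le_mul (hMc k) (hMb (n - k)) (norm_nonneg _) (by positivity)
            _ = (M₁ * M₂) * (εr ^ k * t ^ (n - k) * (n.choose k : ℝ)) := by ring
      _ = (M₁ * M₂) * ∑ k ∈ Finset.range (n + 1),
            εr ^ k * t ^ (n - k) * (n.choose k : ℝ) := by rw [Finset.mul_sum]
      _ = (M₁ * M₂) * (εr + t) ^ n := by rw [← add_pow]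
  calc spectralRadius ℂ a ≤ ENNReal.ofReal (εr + t) :=
        aux_sr_le (mul_pos hM₁ hM₂) (by positivity) hbound
    _ = spectralRadius ℂ b + ε := by
        have : εr + t = (s : ℝ) + (ε : ℝ) := by rw [htdef, hεrdef]; ring
        rw [this, ENNReal.ofReal_add s.coe_nonneg ε.coe_nonneg, hs,
          ENNReal.ofReal_coe_nnreal, ENNReal.ofReal_coe_nnreal]

private lemma aux_main_ge (a b : A) (h : rho a b = 0) :
    spectralRadius ℂ b ≤ spectralRadius ℂ a := by
  refine ENNReal.le_of_forall_pos_le_add fun ε hε hfin => ?_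
  set s : ℝ≥0 := (spectralRadius ℂ a).toNNReal with hsdef
  have hs : spectralRadius ℂ a = (s : ℝ≥0∞) := (ENNReal.coe_toNNReal hfin.ne).symm
  set εr : ℝ := (ε : ℝ) / 2 with hεrdef
  have hεr : 0 < εr := by positivity
  set t : ℝ := (s : ℝ) + εr with htdef
  have ht0 : 0 < t := by positivity
  have hlt : spectralRadius ℂ a < ENNReal.ofReal t := by
    rw [hs, ← ENNReal.ofReal_coe_nnreal]
    exact (ENNReal.ofReal_lt_ofReal_iff ht0).mpr (lt_add_of_pos_right _ hεr)
  obtain ⟨M₂, hM₂, hMa⟩ := aux_glob (fun n => norm_nonneg _) ht0 (aux_ev_pow_norm ht0.le hlt)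
  obtain ⟨M₁, hM₁, hMc⟩ := aux_glob (fun n => norm_nonneg _) hεr (aux_rho_ev a b h hεr)
  have hbound : ∀ n, ‖b ^ n‖ ≤ (M₂ * M₁) * (t + εr) ^ n := by
    intro n
    rw [aux_pow_eq_sum' a b n]
    calc ‖∑ k ∈ Finset.range (n + 1), n.choose k • (a ^ k * ((-Cop a b) ^ (n - k)) 1)‖
        ≤ ∑ k ∈ Finset.range (n + 1), ‖n.choose k • (a ^ k * ((-Cop a b) ^ (n - k)) 1)‖ :=
          norm_sum_le _ _
      _ ≤ ∑ k ∈ Finset.range (n + 1),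
            (M₂ * M₁) * (t ^ k * εr ^ (n - k) * (n.choose k : ℝ)) := by
          refine Finset.sum_le_sum fun k _ => ?_
          calc ‖n.choose k • (a ^ k * ((-Cop a b) ^ (n - k)) 1)‖
              ≤ (n.choose k : ℝ) * ‖a ^ k * ((-Cop a b) ^ (n - k)) 1‖ := norm_nsmul_le
            _ ≤ (n.choose k : ℝ) * (‖a ^ k‖ * ‖((-Cop a b) ^ (n - k)) 1‖) :=
                mul_le_mul_of_nonneg_left (norm_mul_le _ _) (by positivity)
            _ ≤ (n.choose k : ℝ) * ((M₂ * t ^ k) * (M₁ * εr ^ (n - k))) := by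
                refine mul_le_mul_of_nonneg_left ?_ (by positivity)
                refine mul_le_mul (hMa k) ?_ (norm_nonneg _) (by positivity)
                rw [aux_norm_negC]; exact hMc (n - k)
            _ = (M₂ * M₁) * (t ^ k * εr ^ (n - k) * (n.choose k : ℝ)) := by ring
      _ = (M₂ * M₁) * ∑ k ∈ Finset.range (n + 1),
            t ^ k * εr ^ (n - k) * (n.choose k : ℝ) := by rw [Finset.mul_sum]
      _ = (M₂ * M₁) * (t + εr) ^ n := by rw [← add_pow]
  calc spectralRadius ℂ b ≤ ENNReal.ofReal (t + εr) :=
        aux_sr_le (mul_pos hM₂ hM₁) (by positivity) hbound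
    _ = spectralRadius ℂ a + ε := by
        have : t + εr = (s : ℝ) + (ε : ℝ) := by rw [htdef, hεrdef]; ring
        rw [this, ENNReal.ofReal_add s.coe_nonneg ε.coe_nonneg, hs,
          ENNReal.ofReal_coe_nnreal, ENNReal.ofReal_coe_nnreal]

end auxlemmas

theorem stmt9 [NormedRing A] [NormedAlgebra ℂ A] [CompleteSpace A]
    (hA : IsSemisimpleBA A) (a b : A) (ha : a ∈ socle A) (hb : b ∈ socle A)
    (h : rho a b = 0) : spectralRadius ℂ a = spectralRadius ℂ b :=
  le_antisymm (aux_main_le a b h) (aux_main_ge a b h)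
end

section
/- Let A be a unital complex Banach algebra, a, b ∈ A with d(a,b) = 0, and let λ₁ ≠ 0 be an isolated point of σ(a) = σ(b). If the Riesz projections p₁ = p(λ₁,a) and q₁ = p(λ₁,b) satisfy a p₁ = λ₁ p₁ and b q₁ = λ₁ q₁, then p₁ = q₁. -/
open Filter Metric

variable {A : Type*}

section Aux

variable [NormedRing A] [NormedAlgebra ℂ A] [CompleteSpace A]

omit [CompleteSpace A] in
lemma aux_mem_resolventSet {a : A} {lam1 : ℂ} {r : ℝ} (hr : 0 < r)
    (hiso : spectrum ℂ a ∩ closedBall lam1 r = {lam1}) {z : ℂ} (hz : z ∈ sphere lam1 r) :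
    z ∈ resolventSet ℂ a := by
  by_contra h
  have hz' : z ∈ spectrum ℂ a := h
  have hdz : dist z lam1 = r := mem_sphere.mp hz
  have : z ∈ ({lam1} : Set ℂ) := hiso ▸ ⟨hz', mem_closedBall.mpr hdz.le⟩
  rw [Set.mem_singleton_iff] at this
  subst this
  simp [dist_self] at hdz
  exact hr.ne' hdz.symm

lemma aux_cont {a : A} {s : Set ℂ} (h : ∀ z ∈ s, z ∈ resolventSet ℂ a) :
    ContinuousOn (fun z => resolvent a z) s := fun z hz =>
  ((spectrum.hasDerivAt_resolvent (h z hz)).continuousAt).continuousWithinAt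

lemma aux_deriv_pow {b : A} {z : ℂ} (hz : z ∈ resolventSet ℂ b) (k : ℕ) :
    HasDerivAt (fun w => resolvent b w ^ k) ((-(k : ℂ)) • resolvent b z ^ (k + 1)) z := by
  induction k with
  | zero => simpa using hasDerivAt_const z (1 : A)
  | succ k ih =>
    have h1 := spectrum.hasDerivAt_resolvent hz
    have h2 : HasDerivAt (fun w => resolvent b w ^ k * resolvent b w) _ z := ih.mul h1
    simp only [← pow_succ] at h2
    convert h2 using 1
    have hpow : resolvent b z ^ k * resolvent b z ^ 2 = resolvent b z ^ (k + 2) := by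
      rw [← pow_add]
    push_cast
    rw [smul_mul_assoc, ← pow_succ, mul_neg, hpow]
    rw [neg_add, add_smul]
    simp [show k + 1 + 1 = k + 2 from rfl]

lemma aux_int_pow_zero {b : A} {lam1 : ℂ} {r : ℝ} (hr : 0 < r)
    (h : ∀ z ∈ sphere lam1 r, z ∈ resolventSet ℂ b) {n : ℕ} (hn : 1 ≤ n) :
    (∮ z in C(lam1, r), resolvent b z ^ (n + 1)) = 0 := by
  apply circleIntegral.integral_eq_zero_of_hasDerivWithinAt hr.le
    (f := fun w => (-(n : ℂ))⁻¹ • resolvent b w ^ n)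
  intro z hz
  have hD := aux_deriv_pow (h z hz) n
  have := hD.const_smul ((-(n : ℂ))⁻¹)
  rw [smul_smul, inv_mul_cancel₀, one_smul] at this
  · exact this.hasDerivWithinAt
  · simp
    omega

lemma aux_integral_add {f g : ℂ → A} {c : ℂ} {R : ℝ} (hf : CircleIntegrable f c R)
    (hg : CircleIntegrable g c R) :
    (∮ z in C(c, R), (f z + g z)) = (∮ z in C(c, R), f z) + ∮ z in C(c, R), g z := by
  simp only [circleIntegral, smul_add, intervalIntegral.integral_add hf.out hg.out]

lemma aux_mul_integral (x : A) {f : ℂ → A} {c : ℂ} {R : ℝ} (hf : CircleIntegrable f c R) :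
    (∮ z in C(c, R), x * f z) = x * ∮ z in C(c, R), f z := by
  have h := (ContinuousLinearMap.mul ℂ A x).intervalIntegral_comp_comm hf.out
  calc (∮ z in C(c, R), x * f z)
      = ∫ θ in (0:ℝ)..2*Real.pi, (ContinuousLinearMap.mul ℂ A x)
          (deriv (circleMap c R) θ • f (circleMap c R θ)) := by
        simp [circleIntegral, ContinuousLinearMap.mul_apply']
    _ = (ContinuousLinearMap.mul ℂ A x)
          (∫ θ in (0:ℝ)..2*Real.pi, deriv (circleMap c R) θ • f (circleMap c R θ)) := h
    _ = x * ∮ z in C(c, R), f z := by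
        simp [circleIntegral, ContinuousLinearMap.mul_apply']

omit [CompleteSpace A] in
lemma aux_resolvent_id {a b : A} {z : ℂ} (ha : z ∈ resolventSet ℂ a)
    (hb : z ∈ resolventSet ℂ b) (x : A) :
    resolvent a z * x
      = x * resolvent b z + resolvent a z * (a * x - x * b) * resolvent b z := by
  have ha' : IsUnit (algebraMap ℂ A z - a) := ha
  have hb' : IsUnit (algebraMap ℂ A z - b) := hb
  have h2 : resolvent a z * (algebraMap ℂ A z - a) = 1 := Ring.inverse_mul_cancel _ ha'
  have h3 : (algebraMap ℂ A z - b) * resolvent b z = 1 := Ring.mul_inverse_cancel _ hb'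
  have key : x * (algebraMap ℂ A z - b) = (algebraMap ℂ A z - a) * x + (a * x - x * b) := by
    rw [mul_sub, sub_mul, ← Algebra.commutes z x]
    noncomm_ring
  calc resolvent a z * x = resolvent a z * x * ((algebraMap ℂ A z - b) * resolvent b z) := by
        rw [h3, mul_one]
    _ = resolvent a z * (x * (algebraMap ℂ A z - b)) * resolvent b z := by noncomm_ring
    _ = resolvent a z * ((algebraMap ℂ A z - a) * x + (a * x - x * b)) * resolvent b z := by
        rw [key]
    _ = (resolvent a z * (algebraMap ℂ A z - a)) * (x * resolvent b z)
          + resolvent a z * (a * x - x * b) * resolvent b z := by noncomm_ring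
    _ = x * resolvent b z + resolvent a z * (a * x - x * b) * resolvent b z := by
        rw [h2, one_mul]

omit [CompleteSpace A] in
lemma aux_Cop_apply (a b x : A) : Cop a b x = a * x - x * b := rfl

omit [CompleteSpace A] in
lemma aux_Cop_succ (a b : A) (n : ℕ) :
    (Cop a b ^ (n + 1)) 1 = a * ((Cop a b ^ n) 1) - ((Cop a b ^ n) 1) * b := by
  rw [pow_succ', Module.End.mul_apply, aux_Cop_apply]

end Aux

theorem stmt14 [NormedRing A] [NormedAlgebra ℂ A] [CompleteSpace A]
    (a b : A) (lam1 : ℂ) (r : ℝ)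
    (hd : qd a b = 0) (hlam : lam1 ≠ 0) (hspec : spectrum ℂ a = spectrum ℂ b)
    (hr : 0 < r) (hisoa : spectrum ℂ a ∩ closedBall lam1 r = {lam1})
    (hisob : spectrum ℂ b ∩ closedBall lam1 r = {lam1})
    (hp : a * rieszP a lam1 r = lam1 • rieszP a lam1 r)
    (hq : b * rieszP b lam1 r = lam1 • rieszP b lam1 r) :
    rieszP a lam1 r = rieszP b lam1 r := by
  classical
  have hA : ∀ z ∈ sphere lam1 r, z ∈ resolventSet ℂ a :=
    fun z hz => aux_mem_resolventSet hr hisoa hz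
  have hB : ∀ z ∈ sphere lam1 r, z ∈ resolventSet ℂ b :=
    fun z hz => aux_mem_resolventSet hr hisob hz
  have contRa := aux_cont hA
  have contRb := aux_cont hB
  set g : ℕ → ℂ → A := fun n z => resolvent a z * ((Cop a b ^ n) 1) * resolvent b z ^ n with hg
  have intg : ∀ n, CircleIntegrable (g n) lam1 r := fun n =>
    ((contRa.mul continuousOn_const).mul (contRb.pow n)).circleIntegrable hr.le
  -- the key identity
  have key : ∀ n : ℕ, (∮ z in C(lam1, r), resolvent a z)
      = (∮ z in C(lam1, r), resolvent b z) + ∮ z in C(lam1, r), g (n + 1) z := by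
    intro n
    induction n with
    | zero =>
      have hpt : Set.EqOn (fun z => resolvent a z) (fun z => resolvent b z + g 1 z)
          (sphere lam1 r) := by
        intro z hz
        have h := aux_resolvent_id (hA z hz) (hB z hz) 1
        simpa [hg, pow_one, aux_Cop_apply] using h
      rw [circleIntegral.integral_congr hr.le hpt]
      exact aux_integral_add (contRb.circleIntegrable hr.le) (intg 1)
    | succ n ih =>
      rw [ih]
      congr 1
      have hpt : Set.EqOn (fun z => g (n + 1) z)
          (fun z => ((Cop a b ^ (n + 1)) 1) * resolvent b z ^ (n + 2) + g (n + 2) z)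
          (sphere lam1 r) := by
        intro z hz
        have h := aux_resolvent_id (hA z hz) (hB z hz) ((Cop a b ^ (n + 1)) 1)
        have h2 := congrArg (fun y => y * resolvent b z ^ (n + 1)) h
        simp only [add_mul, mul_assoc, ← pow_succ'] at h2
        rw [← aux_Cop_succ a b (n + 1)] at h2
        simp only [hg, mul_assoc]
        exact h2
      rw [circleIntegral.integral_congr hr.le hpt,
        aux_integral_add (f := fun z => ((Cop a b ^ (n + 1)) 1) * resolvent b z ^ (n + 2))
          ((continuousOn_const.mul (contRb.pow (n + 2))).circleIntegrable hr.le)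
          (intg (n + 2)),
        aux_mul_integral _ (f := fun z => resolvent b z ^ (n + 2))
          ((contRb.pow (n + 2)).circleIntegrable hr.le),
        aux_int_pow_zero hr hB (show 1 ≤ n + 1 by omega), mul_zero, zero_add]
  -- difference formula
  have hra : rieszP a lam1 r
      = ((2 * Real.pi * Complex.I : ℂ))⁻¹ • ∮ z in C(lam1, r), resolvent a z := by
    simp only [rieszP, resolvent, circleIntegral]
  have hrb : rieszP b lam1 r
      = ((2 * Real.pi * Complex.I : ℂ))⁻¹ • ∮ z in C(lam1, r), resolvent b z := by
    simp only [rieszP, resolvent, circleIntegral]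
  have hdiff : ∀ n : ℕ, rieszP a lam1 r - rieszP b lam1 r
      = ((2 * Real.pi * Complex.I : ℂ))⁻¹ • ∮ z in C(lam1, r), g (n + 1) z := by
    intro n
    rw [hra, hrb, ← smul_sub, key n, add_sub_cancel_left]
  -- bounds on the resolvents
  obtain ⟨Ka0, hKa0⟩ := (isCompact_sphere lam1 r).exists_bound_of_continuousOn contRa
  obtain ⟨Mb0, hMb0⟩ := (isCompact_sphere lam1 r).exists_bound_of_continuousOn contRb
  set Ka := max Ka0 1 with hKadef
  set Mb := max Mb0 1 with hMbdef
  have hKa : ∀ z ∈ sphere lam1 r, ‖resolvent a z‖ ≤ Ka := fun z hz =>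
    (hKa0 z hz).trans (le_max_left _ _)
  have hMb : ∀ z ∈ sphere lam1 r, ‖resolvent b z‖ ≤ Mb := fun z hz =>
    (hMb0 z hz).trans (le_max_left _ _)
  have hKa1 : (1 : ℝ) ≤ Ka := le_max_right _ _
  have hMb1 : (1 : ℝ) ≤ Mb := le_max_right _ _
  -- the sequence u
  set u : ℕ → ℝ := fun n => ‖(Cop a b ^ n) 1‖ ^ (1 / (n : ℝ)) with hu
  have hun0 : ∀ n, 0 ≤ u n := fun n => Real.rpow_nonneg (norm_nonneg _) _
  -- boundedness of u
  set K : ℝ := ‖a‖ + ‖b‖ + 1 with hK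
  set D : ℝ := ‖(1 : A)‖ + 1 with hD
  have hK1 : (1 : ℝ) ≤ K := by
    rw [hK]; have := norm_nonneg a; have := norm_nonneg b; linarith
  have hD1 : (1 : ℝ) ≤ D := by rw [hD]; have := norm_nonneg (1 : A); linarith
  have hKD1 : (1 : ℝ) ≤ K * D := by nlinarith
  have hcn : ∀ n, ‖(Cop a b ^ n) 1‖ ≤ (K * D) ^ (n + 1) := by
    intro n
    induction n with
    | zero =>
      simp only [pow_zero, Module.End.one_apply, zero_add, pow_one]
      calc ‖(1:A)‖ ≤ D := by rw [hD]; linarith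
        _ ≤ K * D := by nlinarith
    | succ n ih =>
      rw [aux_Cop_succ]
      have e2 : (0:ℝ) < (K * D) ^ (n + 1) := by positivity
      have hx0 := norm_nonneg ((Cop a b ^ n) 1)
      calc ‖a * ((Cop a b ^ n) 1) - ((Cop a b ^ n) 1) * b‖
          ≤ ‖a‖ * ‖(Cop a b ^ n) 1‖ + ‖(Cop a b ^ n) 1‖ * ‖b‖ :=
            (norm_sub_le _ _).trans (add_le_add (norm_mul_le _ _) (norm_mul_le _ _))
        _ ≤ K * ‖(Cop a b ^ n) 1‖ := by
            rw [hK, add_mul, add_mul, one_mul, mul_comm ‖(Cop a b ^ n) 1‖ ‖b‖]; linarith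
        _ ≤ K * (K * D) ^ (n + 1) := by
            have hK0 : (0:ℝ) ≤ K := by linarith
            exact mul_le_mul_of_nonneg_left ih hK0
        _ ≤ (K * D) * (K * D) ^ (n + 1) := by
            nlinarith [e2, mul_nonneg (mul_nonneg (by linarith : (0:ℝ) ≤ K)
              (by linarith : (0:ℝ) ≤ D - 1)) e2.le]
        _ = (K * D) ^ (n + 1 + 1) := by ring
  have hub : ∀ n, u n ≤ (K * D) ^ 2 := by
    intro n
    rcases Nat.eq_zero_or_pos n with hn | hn
    · subst hn
      simp only [hu, Nat.cast_zero, div_zero, Real.rpow_zero]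
      nlinarith
    · have h1 : u n ≤ ((K * D) ^ (n + 1)) ^ (1 / (n : ℝ)) :=
        Real.rpow_le_rpow (norm_nonneg _) (hcn n) (by positivity)
      refine h1.trans ?_
      rw [← Real.rpow_natCast (K * D) (n + 1), ← Real.rpow_mul (by positivity),
        ← Real.rpow_natCast (K * D) 2]
      apply Real.rpow_le_rpow_of_exponent_le hKD1
      have hnpos : (0:ℝ) < (n : ℝ) := by exact_mod_cast hn
      rw [mul_one_div, div_le_iff₀ hnpos]
      push_cast
      have hn1 : (1:ℝ) ≤ (n:ℝ) := by exact_mod_cast hn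
      linarith
  have hbdd : IsBoundedUnder (· ≤ ·) atTop u :=
    ⟨(K * D) ^ 2, eventually_map.mpr (Eventually.of_forall hub)⟩
  have hrho : Filter.limsup u atTop ≤ 0 := by
    have h1 : rho a b ≤ 0 := hd ▸ le_max_left _ _
    exact h1
  -- norm of the scalar
  have hscal : ‖((2 * Real.pi * Complex.I : ℂ))⁻¹‖ ≤ 1 := by
    rw [norm_inv]
    have hnn : ‖(2 * Real.pi * Complex.I : ℂ)‖ = 2 * Real.pi := by
      rw [norm_mul, norm_mul, Complex.norm_I, mul_one, Complex.norm_ofNat,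
        Complex.norm_real, Real.norm_eq_abs, abs_of_nonneg Real.pi_pos.le]
    rw [hnn]
    have := Real.pi_gt_three
    rw [inv_le_one_iff₀]
    right; linarith
  -- x_n = u n ^ n
  have hxn : ∀ n : ℕ, 1 ≤ n → ‖(Cop a b ^ n) 1‖ = u n ^ n := by
    intro n hn
    have hnne : (n : ℝ) ≠ 0 := by positivity
    rw [hu]
    rw [← Real.rpow_natCast (‖(Cop a b ^ n) 1‖ ^ (1 / (n : ℝ))) n,
      ← Real.rpow_mul (norm_nonneg _), one_div, inv_mul_cancel₀ hnne, Real.rpow_one]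
  -- main estimate
  have main : ∀ ε' : ℝ, 0 < ε' → ‖rieszP a lam1 r - rieszP b lam1 r‖ ≤ ε' := by
    intro ε' hε'
    set δ : ℝ := min (Mb⁻¹) (ε' / (2 * Real.pi * r * Ka * Mb + 1)) with hδdef
    have hδpos : 0 < δ := by
      apply lt_min
      · positivity
      · have h2π := Real.pi_pos
        positivity
    obtain ⟨N, hN⟩ := eventually_atTop.mp
      (Filter.eventually_lt_of_limsup_lt (lt_of_le_of_lt hrho hδpos) hbdd)
    set n := N + 1 with hndef
    have hun : u n < δ := hN n (by omega)
    have hn1 : 1 ≤ n := by omega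
    -- pointwise bound for g n
    have hbd : ∀ z ∈ sphere lam1 r, ‖g n z‖ ≤ Ka * (Mb * u n) ^ n := by
      intro z hz
      have s1 : ‖g n z‖ ≤ ‖resolvent a z * ((Cop a b ^ n) 1)‖ * ‖resolvent b z ^ n‖ :=
        norm_mul_le _ _
      have s2 : ‖resolvent a z * ((Cop a b ^ n) 1)‖ ≤ ‖resolvent a z‖ * ‖(Cop a b ^ n) 1‖ :=
        norm_mul_le _ _
      have s3 : ‖resolvent b z ^ n‖ ≤ ‖resolvent b z‖ ^ n := norm_pow_le' _ (by omega)
      have s4 : ‖resolvent b z‖ ^ n ≤ Mb ^ n :=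
        pow_le_pow_left₀ (norm_nonneg _) (hMb z hz) n
      have hKa0'' : (0:ℝ) ≤ Ka := le_trans zero_le_one hKa1
      calc ‖g n z‖ ≤ (‖resolvent a z‖ * ‖(Cop a b ^ n) 1‖) * ‖resolvent b z ^ n‖ :=
            s1.trans (mul_le_mul_of_nonneg_right s2 (norm_nonneg _))
        _ ≤ (Ka * ‖(Cop a b ^ n) 1‖) * (Mb ^ n) :=
            mul_le_mul (mul_le_mul_of_nonneg_right (hKa z hz) (norm_nonneg _))
              (s3.trans s4) (norm_nonneg _) (mul_nonneg hKa0'' (norm_nonneg _))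
        _ = Ka * (u n ^ n) * Mb ^ n := by rw [hxn n hn1]
        _ = Ka * (Mb * u n) ^ n := by rw [mul_pow]; ring
    have hint : ‖(∮ z in C(lam1, r), g n z)‖ ≤ 2 * Real.pi * r * (Ka * (Mb * u n) ^ n) :=
      circleIntegral.norm_integral_le_of_norm_le_const hr.le hbd
    have hKa0' : (0:ℝ) < Ka := lt_of_lt_of_le one_pos hKa1
    have hMb0' : (0:ℝ) < Mb := lt_of_lt_of_le one_pos hMb1
    have ht0 : 0 ≤ Mb * u n := mul_nonneg hMb0'.le (hun0 n)
    have ht1 : Mb * u n ≤ 1 := by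
      have : δ ≤ Mb⁻¹ := min_le_left _ _
      calc Mb * u n ≤ Mb * δ := mul_le_mul_of_nonneg_left hun.le hMb0'.le
        _ ≤ Mb * Mb⁻¹ := mul_le_mul_of_nonneg_left this hMb0'.le
        _ = 1 := mul_inv_cancel₀ hMb0'.ne'
    have htpow : (Mb * u n) ^ n ≤ Mb * u n := by
      calc (Mb * u n) ^ n ≤ (Mb * u n) ^ 1 := pow_le_pow_of_le_one ht0 ht1 hn1
        _ = Mb * u n := pow_one _
    have hδ2 : δ ≤ ε' / (2 * Real.pi * r * Ka * Mb + 1) := min_le_right _ _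
    have hπ := Real.pi_pos
    calc ‖rieszP a lam1 r - rieszP b lam1 r‖
        = ‖((2 * Real.pi * Complex.I : ℂ))⁻¹‖ * ‖(∮ z in C(lam1, r), g n z)‖ := by
          rw [hdiff N, norm_smul]
      _ ≤ 1 * (2 * Real.pi * r * (Ka * (Mb * u n) ^ n)) :=
          mul_le_mul hscal hint (norm_nonneg _) one_pos.le
      _ = 2 * Real.pi * r * Ka * (Mb * u n) ^ n := by ring
      _ ≤ 2 * Real.pi * r * Ka * (Mb * δ) := by
          have h1 : (Mb * u n) ^ n ≤ Mb * δ :=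
            htpow.trans (mul_le_mul_of_nonneg_left hun.le hMb0'.le)
          have h2 : (0:ℝ) ≤ 2 * Real.pi * r * Ka := by positivity
          exact mul_le_mul_of_nonneg_left h1 h2
      _ = (2 * Real.pi * r * Ka * Mb) * δ := by ring
      _ ≤ (2 * Real.pi * r * Ka * Mb) * (ε' / (2 * Real.pi * r * Ka * Mb + 1)) := by
          have h2 : (0:ℝ) ≤ 2 * Real.pi * r * Ka * Mb := by positivity
          exact mul_le_mul_of_nonneg_left hδ2 h2
      _ ≤ ε' := by
          have h3 : (0:ℝ) < 2 * Real.pi * r * Ka * Mb + 1 := by positivity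
          rw [mul_div_assoc', div_le_iff₀ h3]
          nlinarith [mul_pos (mul_pos (mul_pos (mul_pos two_pos hπ) hr) hKa0') hMb0']
  -- conclude
  have : ‖rieszP a lam1 r - rieszP b lam1 r‖ ≤ 0 := by
    by_contra hcon
    push_neg at hcon
    have := main (‖rieszP a lam1 r - rieszP b lam1 r‖ / 2) (by linarith)
    linarith
  have := le_antisymm this (norm_nonneg _)
  rwa [norm_eq_zero, sub_eq_zero] at this
end
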